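/- Let n = 2^k with k > 1 and let q be odd. Then the sign of the permutation of {±1}\(Z/nZ) induced by multiplication by q equals the Jacobi symbol (2^k / q) = (2/q)^k. -/

import Mathlib

open scoped Classical

def negSetoid (n : ℕ) : Setoid (ZMod n) where
  r x y := x = y ∨ x = -y
  iseqv := by
    refine ⟨fun x => Or.inl rfl, ?_, ?_⟩
    · rintro x y (rfl | rfl)
      · exact Or.inl rfl
      · exact Or.inr (neg_neg _).symm
    · rintro x y z (rfl | rfl) h2 <;> rcases h2 with rfl | h2 <;> simp_all

lemma pow51 (q : ℤ) (hq8 : q % 8 = 5) (j : ℕ) :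
    ∃ u : ℤ, Odd u ∧ q ^ (2 ^ j) = 1 + 2 ^ (j + 2) * u := by
  induction j with
  | zero =>
    refine ⟨2 * (q / 8) + 1, odd_two_mul_add_one _, ?_⟩
    have h : q = 8 * (q / 8) + 5 := by omega
    rw [pow_zero, pow_one]; omega
  | succ j ih =>
    obtain ⟨u, hu, hqu⟩ := ih
    refine ⟨u + 2 ^ (j + 1) * u ^ 2, ?_, ?_⟩
    · obtain ⟨t, rfl⟩ := hu
      exact ⟨t + 2 ^ j * (t + t + 1) ^ 2, by ring⟩
    · have h2 : q ^ 2 ^ (j + 1) = (q ^ 2 ^ j) ^ 2 := by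
        rw [← pow_mul, pow_succ]
      rw [h2, hqu]; ring

lemma sq1 (q : ℤ) (hq8 : q % 8 = 1) :
    ∀ m, 3 ≤ m → ∃ x : ℤ, x % 4 = 1 ∧ (2 ^ m : ℤ) ∣ x ^ 2 - q := by
  intro m hm
  induction m with
  | zero => omega
  | succ m ih =>
    rcases Nat.lt_or_ge m 3 with hm3 | hm3
    · interval_cases m
      · omega
      · omega
      · exact ⟨1, by norm_num, by norm_num; omega⟩
    · obtain ⟨x, hx4, c, hc⟩ := ih hm3
      rcases Int.even_or_odd c with hce | hco
      · obtain ⟨d, rfl⟩ := hce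
        exact ⟨x, hx4, ⟨d, by rw [hc]; ring⟩⟩
      · refine ⟨x + 2 ^ (m - 1), ?_, ?_⟩
        · have : (2:ℤ) ^ (m - 1) = 4 * 2 ^ (m - 3) := by
            rw [show m - 1 = 2 + (m - 3) by omega]; ring
          omega
        · have hxo : Odd x := by
            rcases Int.even_or_odd x with ⟨t, ht⟩ | h
            · omega
            · exact h
          obtain ⟨e, he⟩ := hxo
          obtain ⟨f, hf⟩ := hco
          have h1 : (x + 2 ^ (m - 1)) ^ 2 - q = 2 ^ m * (c + x + 2 ^ (m - 2)) := by
            have e1 : (x + 2 ^ (m-1)) ^ 2 - q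
                = (x ^ 2 - q) + 2 * 2 ^ (m-1) * x + 2 ^ (m-1) * 2 ^ (m-1) := by ring
            rw [e1, hc,
              show (2:ℤ) * 2 ^ (m-1) = 2 ^ m by rw [← pow_succ']; congr 1; omega,
              show (2:ℤ) ^ (m-1) * 2 ^ (m-1) = 2 ^ m * 2 ^ (m-2) by
                rw [← pow_add, ← pow_add]; congr 1; omega]
            ring
          refine ⟨e + f + 1 + 2 ^ (m - 3), ?_⟩
          rw [h1, pow_succ]
          have h2 : (2:ℤ) ^ (m - 2) = 2 * 2 ^ (m - 3) := by
            rw [← pow_succ']; congr 1; omega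
          rw [h2, he, hf]; ring

lemma castZ_eq_iff (n : ℕ) (a b : ℤ) :
    (a : ZMod n) = (b : ZMod n) ↔ (n : ℤ) ∣ (b - a) := by
  rw [ZMod.intCast_eq_intCast_iff, Int.modEq_iff_dvd]

lemma zrep {n : ℕ} [NeZero n] (x : ZMod n) : ∃ a : ℤ, x = (a : ZMod n) :=
  ⟨(ZMod.cast x : ℤ), (ZMod.intCast_zmod_cast x).symm⟩

lemma odd_unit {n : ℕ} {q : ℤ} (hq : q % 2 = 1) : IsUnit (q : ZMod (2 ^ n)) := by
  have hco : Nat.Coprime q.natAbs 2 :=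
    Nat.coprime_two_right.mpr (Int.natAbs_odd.mpr (Int.odd_iff.mpr hq))
  have h1 : IsCoprime q 2 := by
    rw [Int.isCoprime_iff_gcd_eq_one]
    simpa [Int.gcd] using hco
  have h2 : IsCoprime q ((2 : ℤ) ^ n) := h1.pow_right
  have h3 := h2.map (Int.castRingHom (ZMod (2 ^ n)))
  simp only [map_pow, map_ofNat, Int.coe_castRingHom] at h3
  have h5 : ((2 : ZMod (2 ^ n))) ^ n = 0 := by
    have h := ZMod.natCast_self (2 ^ n)
    push_cast at h
    exact h
  rw [h5] at h3
  exact isCoprime_zero_right.mp h3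

lemma step (k : ℕ) (hk : 2 ≤ k) (q : ℤ) (hq4 : q % 4 = 1)
    (σ : Equiv.Perm (Quotient (negSetoid (2 ^ (k + 1)))))
    (hσ : ∀ x : ZMod (2 ^ (k + 1)), σ (Quotient.mk (negSetoid (2 ^ (k + 1))) x)
        = Quotient.mk (negSetoid (2 ^ (k + 1))) ((q : ZMod (2 ^ (k + 1))) * x)) :
    ∃ σ' : Equiv.Perm (Quotient (negSetoid (2 ^ k))),
      (∀ x : ZMod (2 ^ k), σ' (Quotient.mk (negSetoid (2 ^ k)) x)
          = Quotient.mk (negSetoid (2 ^ k)) ((q : ZMod (2 ^ k)) * x)) ∧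
      Equiv.Perm.sign σ = Equiv.Perm.sign σ' * (if q % 8 = 1 then (1 : ℤˣ) else -1) := by
  haveI : NeZero (2 ^ k) := ⟨pow_ne_zero k (by norm_num)⟩
  haveI : NeZero (2 ^ (k + 1)) := ⟨pow_ne_zero _ (by norm_num)⟩
  have hNN : ((2 ^ (k + 1) : ℕ) : ℤ) = 2 * ((2 ^ k : ℕ) : ℤ) := by
    push_cast; ring
  -- the even predicate
  set P : Quotient (negSetoid (2 ^ (k + 1))) → Prop :=
    fun c => ∃ y : ZMod (2 ^ (k + 1)), c = Quotient.mk (negSetoid (2 ^ (k + 1))) (2 * y) with hPdef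
  have hqu : IsUnit ((q : ZMod (2 ^ (k + 1)))) := odd_unit (by omega)
  set u : (ZMod (2 ^ (k + 1)))ˣ := hqu.unit with hudef
  have hu : (u : ZMod (2 ^ (k + 1))) = (q : ZMod (2 ^ (k + 1))) := hqu.unit_spec
  have hPiff : ∀ c, P c ↔ P (σ c) := by
    intro c
    constructor
    · rintro ⟨y, rfl⟩
      rw [hσ]
      exact ⟨(q : ZMod (2 ^ (k + 1))) * y, by rw [mul_left_comm]⟩
    · intro hp
      obtain ⟨x, rfl⟩ := Quotient.exists_rep c
      rw [hσ] at hp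
      obtain ⟨y, hy⟩ := hp
      have hrel := Quotient.exact hy
      have hx : x = ↑u⁻¹ * ((q : ZMod (2 ^ (k + 1))) * x) := by
        rw [← hu, ← mul_assoc, Units.inv_mul, one_mul]
      rcases hrel with h | h
      · refine ⟨↑u⁻¹ * y, ?_⟩
        rw [show x = 2 * (↑u⁻¹ * y) from by rw [hx, h]; ring]
      · refine ⟨-(↑u⁻¹ * y), ?_⟩
        rw [show x = 2 * (-(↑u⁻¹ * y)) from by rw [hx, h]; ring]
  -- the doubling map
  set dbl : ZMod (2 ^ k) → ZMod (2 ^ (k + 1)) := fun x => ((2 * (ZMod.cast x : ℤ) : ℤ) : ZMod (2 ^ (k + 1))) with hdbl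
  have dblrep : ∀ a : ℤ, dbl ((a : ZMod (2 ^ k))) = ((2 * a : ℤ) : ZMod (2 ^ (k + 1))) := by
    intro a
    have h1 : (((ZMod.cast ((a : ZMod (2 ^ k)) : ZMod (2 ^ k)) : ℤ)) : ZMod (2 ^ k)) = (a : ZMod (2 ^ k)) :=
      ZMod.intCast_zmod_cast _
    obtain ⟨c, hc⟩ := (castZ_eq_iff _ _ _).mp h1
    refine (castZ_eq_iff _ _ _).mpr ⟨c, ?_⟩
    rw [hNN]
    linear_combination 2 * hc
  have dbl2 : ∀ a : ℤ, dbl ((a : ZMod (2 ^ k))) = 2 * ((a : ℤ) : ZMod (2 ^ (k + 1))) := by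
    intro a; rw [dblrep]; push_cast; ring
  have dblneg : ∀ x : ZMod (2 ^ k), dbl (-x) = -dbl x := by
    intro x
    obtain ⟨a, rfl⟩ := zrep x
    have h2 : -((a : ℤ) : ZMod (2 ^ k)) = ((-a : ℤ) : ZMod (2 ^ k)) := by push_cast; ring
    rw [h2, dblrep, dblrep]; push_cast; ring
  have dblinj : ∀ x y : ZMod (2 ^ k), dbl x = dbl y → x = y := by
    intro x y h
    obtain ⟨a, rfl⟩ := zrep x
    obtain ⟨b, rfl⟩ := zrep y
    rw [dblrep, dblrep] at h
    obtain ⟨c, hc⟩ := (castZ_eq_iff _ _ _).mp h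
    refine (castZ_eq_iff _ _ _).mpr ⟨c, ?_⟩
    rw [hNN] at hc
    linarith
  have key : ∀ x : ZMod (2 ^ k), (q : ZMod (2 ^ (k + 1))) * dbl x = dbl ((q : ZMod (2 ^ k)) * x) := by
    intro x
    obtain ⟨a, rfl⟩ := zrep x
    have h2 : (q : ZMod (2 ^ k)) * ((a : ℤ) : ZMod (2 ^ k)) = ((q * a : ℤ) : ZMod (2 ^ k)) := by push_cast; ring
    rw [h2, dblrep, dblrep]; push_cast; ring
  -- the even-part equivalence
  set F0 : ZMod (2 ^ k) → {c : Quotient (negSetoid (2 ^ (k + 1))) // P c} :=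
    fun x => ⟨Quotient.mk (negSetoid (2 ^ (k + 1))) (dbl x),
      by obtain ⟨a, rfl⟩ := zrep x; exact ⟨((a : ℤ) : ZMod (2 ^ (k + 1))), by rw [dbl2]⟩⟩ with hF0
  have hresp : ∀ x y : ZMod (2 ^ k), (negSetoid (2 ^ k)).r x y → F0 x = F0 y := by
    rintro x y (rfl | rfl)
    · rfl
    · exact Subtype.ext (Quotient.sound (by rw [dblneg]; exact Or.inr rfl))
  set f : Quotient (negSetoid (2 ^ k)) → {c : Quotient (negSetoid (2 ^ (k + 1))) // P c} :=
    Quotient.lift F0 hresp with hf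
  have finj : Function.Injective f := by
    intro c d
    induction c using Quotient.ind
    induction d using Quotient.ind
    rename_i x y
    intro h
    have h2 : Quotient.mk (negSetoid (2 ^ (k + 1))) (dbl x) = Quotient.mk (negSetoid (2 ^ (k + 1))) (dbl y) :=
      congrArg Subtype.val h
    apply Quotient.sound
    rcases Quotient.exact h2 with h3 | h3
    · exact Or.inl (dblinj _ _ h3)
    · refine Or.inr (dblinj _ _ ?_)
      rw [h3, dblneg]
  have fsurj : Function.Surjective f := by
    rintro ⟨c, y, rfl⟩
    obtain ⟨b, rfl⟩ := zrep y
    exact ⟨Quotient.mk (negSetoid (2 ^ k)) ((b : ZMod (2 ^ k))),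
      Subtype.ext (by show Quotient.mk _ (dbl _) = _; rw [dbl2])⟩
  set D := Equiv.ofBijective f ⟨finj, fsurj⟩ with hD
  -- splitting σ
  set ep := σ.subtypePerm (fun c => (hPiff c).symm) with hep
  set en := σ.subtypePerm (p := fun c => ¬ P c) (fun c => (not_congr (hPiff c)).symm) with hen
  have hsplit : σ = ep.subtypeCongr en := by
    ext c
    rw [Equiv.Perm.subtypeCongr.apply]
    split_ifs with h <;> rfl
  set σ' := (D.symm).permCongr ep with hσ'def
  have hσ' : ∀ x : ZMod (2 ^ k), σ' (Quotient.mk (negSetoid (2 ^ k)) x)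
      = Quotient.mk (negSetoid (2 ^ k)) ((q : ZMod (2 ^ k)) * x) := by
    intro x
    have h1 : ep (D (Quotient.mk (negSetoid (2 ^ k)) x)) = D (Quotient.mk (negSetoid (2 ^ k)) ((q : ZMod (2 ^ k)) * x)) := by
      apply Subtype.ext
      show σ (Quotient.mk (negSetoid (2 ^ (k + 1))) (dbl x)) = Quotient.mk (negSetoid (2 ^ (k + 1))) (dbl ((q : ZMod (2 ^ k)) * x))
      rw [hσ, key]
    rw [hσ'def, Equiv.permCongr_apply, Equiv.symm_symm, h1, Equiv.symm_apply_apply]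
  have hsigneq : Equiv.Perm.sign σ' = Equiv.Perm.sign ep := Equiv.Perm.sign_permCongr _ _
  have hsignen : Equiv.Perm.sign en = (if q % 8 = 1 then (1 : ℤˣ) else -1) := by
    have h4 : (4 : ℕ) ∣ 2 ^ (k + 1) :=
      ⟨2 ^ (k - 1), by rw [show k + 1 = 2 + (k - 1) by omega]; ring⟩
    set S := MonoidHom.ker (Units.map (ZMod.castHom h4 (ZMod 4)).toMonoidHom) with hS
    have memS_iff : ∀ v : (ZMod (2 ^ (k + 1)))ˣ,
        v ∈ S ↔ ZMod.castHom h4 (ZMod 4) (v : ZMod (2 ^ (k + 1))) = 1 := by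
      intro v
      rw [hS, MonoidHom.mem_ker, Units.ext_iff]
      simp
    have cast1 : ∀ a : ℤ, a % 4 = 1 → ZMod.castHom h4 (ZMod 4) ((a : ZMod (2 ^ (k + 1)))) = 1 := by
      intro a ha
      rw [map_intCast]
      have : ((a : ℤ) : ZMod 4) = ((1 : ℤ) : ZMod 4) :=
        (castZ_eq_iff _ _ _).mpr ⟨(1 - a) / 4, by push_cast; omega⟩
      rw [this]; push_cast; rfl
    have mkS : ∀ a : ℤ, a % 4 = 1 → ∃ v : ↥S,
        ((v : (ZMod (2 ^ (k + 1)))ˣ) : ZMod (2 ^ (k + 1))) = (a : ZMod (2 ^ (k + 1))) := by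
      intro a ha
      have hu' : IsUnit ((a : ZMod (2 ^ (k + 1)))) := odd_unit (by omega)
      refine ⟨⟨hu'.unit, ?_⟩, hu'.unit_spec⟩
      rw [memS_iff, hu'.unit_spec]
      exact cast1 a ha
    have hodd : ∀ v : ↥S, ¬ P (Quotient.mk (negSetoid (2 ^ (k + 1)))
        ((↑(↑v : (ZMod (2 ^ (k + 1)))ˣ)) : ZMod (2 ^ (k + 1)))) := by
      rintro v ⟨y, hy⟩
      have hrel := Quotient.exact hy
      have hun : IsUnit (2 * y) := by
        rcases hrel with h | h
        · exact h ▸ (Units.isUnit _)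
        · exact (IsUnit.neg_iff _).mp (h ▸ (Units.isUnit _))
      have h2 : (2 : ℕ) ∣ 2 ^ (k + 1) := ⟨2 ^ k, by ring⟩
      have h3 := hun.map (ZMod.castHom h2 (ZMod 2))
      rw [map_mul] at h3
      have h0 : (ZMod.castHom h2 (ZMod 2)) 2 = 0 := by
        rw [show ((2 : ZMod (2 ^ (k + 1)))) = ((2 : ℤ) : ZMod (2 ^ (k + 1))) by push_cast; rfl,
          map_intCast]
        decide
      rw [h0, zero_mul] at h3
      exact not_isUnit_zero h3
    set gmap : ↥S → {c : Quotient (negSetoid (2 ^ (k + 1))) // ¬ P c} :=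
      fun v => ⟨Quotient.mk (negSetoid (2 ^ (k + 1))) (↑(↑v : (ZMod (2 ^ (k + 1)))ˣ)), hodd v⟩
      with hgmap
    have ginj : Function.Injective gmap := by
      intro v w h
      have h2 : Quotient.mk (negSetoid (2 ^ (k + 1))) (↑(↑v : (ZMod (2 ^ (k + 1)))ˣ))
          = Quotient.mk (negSetoid (2 ^ (k + 1))) (↑(↑w : (ZMod (2 ^ (k + 1)))ˣ)) :=
        congrArg Subtype.val h
      rcases Quotient.exact h2 with h3 | h3
      · exact Subtype.ext (Units.ext h3)
      · exfalso
        have hv := (memS_iff _).mp v.2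
        have hw := (memS_iff _).mp w.2
        have h5 := congrArg (ZMod.castHom h4 (ZMod 4)) h3
        rw [map_neg, hv, hw] at h5
        exact absurd h5 (by decide)
    have gsurj : Function.Surjective gmap := by
      rintro ⟨c, hc⟩
      obtain ⟨x, rfl⟩ := Quotient.exists_rep c
      obtain ⟨a, rfl⟩ := zrep x
      have ha2 : a % 2 = 1 := by
        by_contra h
        apply hc
        refine ⟨(((a / 2 : ℤ)) : ZMod (2 ^ (k + 1))), ?_⟩
        have h6 : ((a : ℤ) : ZMod (2 ^ (k + 1))) = ((2 * (a / 2) : ℤ) : ZMod (2 ^ (k + 1))) :=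
          congrArg _ (by omega)
        rw [h6, show ((2 * (a / 2) : ℤ) : ZMod (2 ^ (k + 1)))
            = 2 * (((a / 2 : ℤ)) : ZMod (2 ^ (k + 1))) from by push_cast; ring]
      rcases (by omega : a % 4 = 1 ∨ a % 4 = 3) with h1 | h3
      · obtain ⟨v, hv⟩ := mkS a h1
        exact ⟨v, Subtype.ext (congrArg (Quotient.mk (negSetoid (2 ^ (k + 1)))) hv)⟩
      · obtain ⟨v, hv⟩ := mkS (-a) (by omega)
        refine ⟨v, Subtype.ext ?_⟩
        show Quotient.mk (negSetoid (2 ^ (k + 1))) _ = Quotient.mk (negSetoid (2 ^ (k + 1))) _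
        rw [hv]
        exact Quotient.sound (Or.inr (by push_cast; ring))
    set G := Equiv.ofBijective gmap ⟨ginj, gsurj⟩ with hG
    obtain ⟨gq, hgq⟩ := mkS q hq4
    set τ : Equiv.Perm ↥S := Equiv.mulLeft gq with hτ
    have hcoemul : ∀ v : ↥S, ((↑(↑(gq * v) : (ZMod (2 ^ (k + 1)))ˣ)) : ZMod (2 ^ (k + 1)))
        = (q : ZMod (2 ^ (k + 1))) * (↑(↑v : (ZMod (2 ^ (k + 1)))ˣ)) := by
      intro v
      push_cast
      rw [hgq]
    have hent : en = G.permCongr τ := by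
      apply Equiv.ext
      intro d
      rw [Equiv.permCongr_apply]
      have hd : d = G (G.symm d) := (Equiv.apply_symm_apply _ _).symm
      rw [hd, Equiv.symm_apply_apply]
      set v := G.symm d
      apply Subtype.ext
      show σ (Quotient.mk (negSetoid (2 ^ (k + 1))) _) = Quotient.mk (negSetoid (2 ^ (k + 1))) _
      rw [hσ]
      congr 1
      rw [show τ v = gq * v from rfl, hcoemul]
    rw [hent, Equiv.Perm.sign_permCongr]
    -- now compute sign of mulLeft gq
    rcases (by omega : q % 8 = 1 ∨ q % 8 = 5) with h8 | h8
    · rw [if_pos h8]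
      obtain ⟨x, hx4, hdvd⟩ := sq1 q h8 (k + 1) (by omega)
      obtain ⟨w, hw⟩ := mkS x hx4
      have hgqw : gq = w * w := by
        apply Subtype.ext
        apply Units.ext
        push_cast
        rw [hw, hgq]
        rw [show ((x : ZMod (2 ^ (k + 1))) * (x : ZMod (2 ^ (k + 1)))) = ((x * x : ℤ) : ZMod (2 ^ (k + 1))) from by push_cast; ring]
        symm
        apply (castZ_eq_iff _ _ _).mpr
        obtain ⟨c, hc⟩ := hdvd
        exact ⟨-c, by push_cast; linear_combination -hc⟩
      rw [hτ, hgqw, Equiv.mulLeft_mul, map_mul]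
      exact Int.units_mul_self _
    · rw [if_neg (by omega)]
      haveI : Fact (Nat.Prime 2) := ⟨Nat.prime_two⟩
      have hord1 : ((q : ZMod (2 ^ (k + 1)))) ^ (2 ^ (k - 1)) = 1 := by
        obtain ⟨u', hu'odd, hqeq⟩ := pow51 q h8 (k - 1)
        rw [← Int.cast_pow, hqeq, show (k - 1) + 2 = k + 1 by omega,
          show (1 : ZMod (2 ^ (k + 1))) = ((1 : ℤ) : ZMod (2 ^ (k + 1))) from by push_cast; rfl]
        exact (castZ_eq_iff _ _ _).mpr ⟨-u', by push_cast; ring⟩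
      have hordne : ((q : ZMod (2 ^ (k + 1)))) ^ (2 ^ (k - 2)) ≠ 1 := by
        obtain ⟨u', hu'odd, hqeq⟩ := pow51 q h8 (k - 2)
        rw [← Int.cast_pow, hqeq, show (k - 2) + 2 = k by omega,
          show (1 : ZMod (2 ^ (k + 1))) = ((1 : ℤ) : ZMod (2 ^ (k + 1))) from by push_cast; rfl]
        intro hcontr
        obtain ⟨c, hc⟩ := (castZ_eq_iff _ _ _).mp hcontr
        push_cast at hc
        rw [show (2 : ℤ) ^ (k + 1) = 2 ^ k * 2 from pow_succ 2 k] at hc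
        have hcanc : (2 : ℤ) ^ k * u' = 2 ^ k * (-(2 * c)) := by linear_combination -hc
        have hu2 := mul_left_cancel₀ (show ((2 : ℤ) ^ k) ≠ 0 from by positivity) hcanc
        obtain ⟨t, rfl⟩ := hu'odd
        omega
      have hordq : orderOf ((q : ZMod (2 ^ (k + 1)))) = 2 ^ (k - 1) := by
        have h := orderOf_eq_prime_pow (x := ((q : ZMod (2 ^ (k + 1))))) (p := 2) (n := k - 2)
          hordne (by rw [show (k - 2) + 1 = k - 1 by omega]; exact hord1)
        rw [h]; congr 1; omega
      have hordgq : orderOf gq = 2 ^ (k - 1) := by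
        rw [← hordq, ← hgq, orderOf_units, Subgroup.orderOf_coe]
      -- card of S
      haveI : NeZero (2 ^ (k - 1)) := ⟨pow_ne_zero _ (by norm_num)⟩
      have hcardle : Nat.card ↥S ≤ 2 ^ (k - 1) := by
        set A := {x : ZMod (2 ^ (k + 1)) // ZMod.castHom h4 (ZMod 4) x = 1} with hA
        have hSA : Function.Injective (fun v : ↥S => (⟨_, (memS_iff _).mp v.2⟩ : A)) := by
          intro v w h
          exact Subtype.ext (Units.ext (congrArg Subtype.val h))
        have hu4 : ∀ b : ℤ, ZMod.castHom h4 (ZMod 4) ((1 + 4 * b : ℤ) : ZMod (2 ^ (k + 1))) = 1 := by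
          intro b
          apply cast1
          omega
        set u4 : ZMod (2 ^ (k - 1)) → A :=
          fun y => ⟨((1 + 4 * (ZMod.cast y : ℤ) : ℤ) : ZMod (2 ^ (k + 1))), hu4 _⟩ with hu4def
        have u4rep : ∀ b : ℤ, (u4 ((b : ZMod (2 ^ (k - 1))))).val
            = ((1 + 4 * b : ℤ) : ZMod (2 ^ (k + 1))) := by
          intro b
          have h1 : (((ZMod.cast ((b : ZMod (2 ^ (k - 1)))) : ℤ)) : ZMod (2 ^ (k - 1)))
              = (b : ZMod (2 ^ (k - 1))) := ZMod.intCast_zmod_cast _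
          obtain ⟨c, hc⟩ := (castZ_eq_iff _ _ _).mp h1
          apply (castZ_eq_iff _ _ _).mpr
          refine ⟨c, ?_⟩
          push_cast at hc ⊢
          rw [show (2 : ℤ) ^ (k + 1) = 4 * 2 ^ (k - 1) from by
            rw [show k + 1 = 2 + (k - 1) by omega]; ring]
          linear_combination 4 * hc
        have u4inj : Function.Injective u4 := by
          intro y z h
          obtain ⟨b, rfl⟩ := zrep y
          obtain ⟨c, rfl⟩ := zrep z
          have h2 : ((1 + 4 * b : ℤ) : ZMod (2 ^ (k + 1))) = ((1 + 4 * c : ℤ) : ZMod (2 ^ (k + 1))) := by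
            rw [← u4rep, ← u4rep, h]
          obtain ⟨d, hd⟩ := (castZ_eq_iff _ _ _).mp h2
          apply (castZ_eq_iff _ _ _).mpr
          refine ⟨d, ?_⟩
          push_cast at hd ⊢
          rw [show (2 : ℤ) ^ (k + 1) = 4 * 2 ^ (k - 1) from by
            rw [show k + 1 = 2 + (k - 1) by omega]; ring] at hd
          linarith
        have u4surj : Function.Surjective u4 := by
          rintro ⟨x, hx⟩
          obtain ⟨a, rfl⟩ := zrep x
          rw [map_intCast] at hx
          have h5 : ((a : ℤ) : ZMod 4) = ((1 : ℤ) : ZMod 4) := by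
            rw [hx]; push_cast; rfl
          obtain ⟨c, hc⟩ := (castZ_eq_iff _ _ _).mp h5
          refine ⟨(((a - 1) / 4 : ℤ) : ZMod (2 ^ (k - 1))), Subtype.ext ?_⟩
          rw [u4rep]
          congr 1
          omega
        have hcardA : Nat.card A = 2 ^ (k - 1) := by
          rw [← Nat.card_congr (Equiv.ofBijective u4 ⟨u4inj, u4surj⟩), Nat.card_zmod]
        rw [← hcardA]
        exact Nat.card_le_card_of_injective _ hSA
      have hcardge : 2 ^ (k - 1) ≤ Nat.card ↥S := by
        rw [← hordgq, ← Nat.card_zpowers]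
        exact Nat.card_le_card_of_injective (fun x : (Subgroup.zpowers gq) => (x : ↥S))
          Subtype.coe_injective
      have hcard : Nat.card ↥S = 2 ^ (k - 1) := le_antisymm hcardle hcardge
      have htop : ∀ y : ↥S, y ∈ Subgroup.zpowers gq := by
        have h1 : (Subgroup.zpowers gq) = ⊤ :=
          Subgroup.eq_top_of_card_eq _ (by rw [Nat.card_zpowers, hordgq, hcard])
        intro y
        rw [h1]
        trivial
      have hgqne : gq ≠ 1 := by
        intro hcontr
        have h5 : ((q : ZMod (2 ^ (k + 1)))) = ((1 : ℤ) : ZMod (2 ^ (k + 1))) := by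
          rw [← hgq, hcontr]
          push_cast
          rfl
        obtain ⟨c, hc⟩ := (castZ_eq_iff _ _ _).mp h5
        have h8d : ((2 : ℤ)) ^ (k + 1) = 8 * 2 ^ (k - 2) := by
          rw [show k + 1 = 3 + (k - 2) by omega]; ring
        push_cast at hc
        rw [h8d] at hc
        have h9 : (8 : ℤ) ∣ 1 - q := ⟨2 ^ (k - 2) * c, by linear_combination hc⟩
        obtain ⟨d, hd⟩ := h9
        omega
      have hfix : ∀ v : ↥S, τ v ≠ v := by
        intro v hcontr
        apply hgqne
        have h5 : gq * v = 1 * v := by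
          rw [one_mul]
          exact hcontr
        exact mul_right_cancel h5
      have hcyc : Equiv.Perm.IsCycle τ := by
        refine ⟨1, hfix 1, ?_⟩
        intro y _
        obtain ⟨i, hi⟩ := Subgroup.mem_zpowers_iff.mp (htop y)
        refine ⟨i, ?_⟩
        rw [hτ, Equiv.zpow_mulLeft]
        show gq ^ i * 1 = y
        rw [mul_one, hi]
      have hsupp : τ.support = Finset.univ :=
        Finset.eq_univ_iff_forall.mpr (fun v => Equiv.Perm.mem_support.mpr (hfix v))
      have hsign := hcyc.sign
      rw [hsupp, Finset.card_univ, ← Nat.card_eq_fintype_card, hcard] at hsign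
      rw [hsign]
      have heven : Even (2 ^ (k - 1)) := ⟨2 ^ (k - 2), by rw [show k - 1 = 1 + (k - 2) by omega]; ring⟩
      rw [heven.neg_one_pow]

  refine ⟨σ', hσ', ?_⟩
  rw [hsplit, Equiv.Perm.sign_subtypeCongr, hsigneq, hsignen]

lemma main_ind (q : ℤ) (hq4 : q % 4 = 1) :
    ∀ k, 2 ≤ k → ∀ σ : Equiv.Perm (Quotient (negSetoid (2 ^ k))),
      (∀ x : ZMod (2 ^ k), σ (Quotient.mk (negSetoid (2 ^ k)) x)
          = Quotient.mk (negSetoid (2 ^ k)) ((q : ZMod (2 ^ k)) * x)) →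
      Equiv.Perm.sign σ = (if q % 8 = 1 then (1 : ℤˣ) else -1) ^ k := by
  intro k hk
  induction k, hk using Nat.le_induction with
  | base =>
    intro σ hσ
    have hq : (q : ZMod (2 ^ 2)) = 1 := by
      rw [show ((1 : ZMod (2 ^ 2))) = ((1 : ℤ) : ZMod (2 ^ 2)) from by push_cast; rfl]
      exact (castZ_eq_iff _ _ _).mpr ⟨(1 - q) / 4, by push_cast; omega⟩
    have hid : σ = 1 := by
      apply Equiv.ext
      intro c
      obtain ⟨x, rfl⟩ := Quotient.exists_rep c
      rw [hσ, hq, one_mul]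
      rfl
    rw [hid, map_one]
    symm
    rw [pow_two, Int.units_mul_self]
  | succ k hk ih =>
    intro σ hσ
    obtain ⟨σ', hσ', hsign⟩ := step k hk q hq4 σ hσ
    rw [hsign, ih σ' hσ', pow_succ]

theorem quot_sign_two_pow
    (k n : ℕ) [NeZero n] (hk : 1 < k) (hn : n = 2 ^ k) (q : ℤ) (hq : Odd q)
    (σ : Equiv.Perm (Quotient (negSetoid n)))
    (hσ : ∀ x : ZMod n,
      σ (Quotient.mk (negSetoid n) x) = Quotient.mk (negSetoid n) ((q : ZMod n) * x)) :
    (Equiv.Perm.sign σ : ℤ) = jacobiSym (2 ^ k : ℤ) q.natAbs := by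
  subst hn
  have hq2 : q % 2 = 1 := Int.odd_iff.mp hq
  obtain ⟨q', hq'4, habs, hσ'⟩ : ∃ q' : ℤ, q' % 4 = 1 ∧ q'.natAbs = q.natAbs ∧
      ∀ x : ZMod (2 ^ k), σ (Quotient.mk (negSetoid (2 ^ k)) x)
        = Quotient.mk (negSetoid (2 ^ k)) ((q' : ZMod (2 ^ k)) * x) := by
    rcases (by omega : q % 4 = 1 ∨ q % 4 = 3) with h | h
    · exact ⟨q, h, rfl, hσ⟩
    · refine ⟨-q, by omega, Int.natAbs_neg q, ?_⟩
      intro x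
      rw [hσ]
      exact Quotient.sound (Or.inr (by push_cast; ring))
  have hsig := main_ind q' hq'4 k hk σ hσ'
  have hoddn : Odd (q.natAbs) := Int.natAbs_odd.mpr hq
  rw [jacobiSym.pow_left, jacobiSym.at_two hoddn]
  have hchib : (ZMod.χ₈ (q.natAbs) : ℤ) = ((if q' % 8 = 1 then (1 : ℤˣ) else -1 : ℤˣ) : ℤ) := by
    rw [ZMod.χ₈_nat_eq_if_mod_eight]
    rw [if_neg (by omega : ¬ (q.natAbs % 2 = 0))]
    rcases (by omega : q' % 8 = 1 ∨ q' % 8 = 5) with h | h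
    · rw [if_pos (by omega : q.natAbs % 8 = 1 ∨ q.natAbs % 8 = 7), if_pos h]
      rfl
    · rw [if_neg (by omega : ¬ (q.natAbs % 8 = 1 ∨ q.natAbs % 8 = 7)), if_neg (by omega)]
      rfl
  calc ((Equiv.Perm.sign σ : ℤˣ) : ℤ)
      = (((if q' % 8 = 1 then (1 : ℤˣ) else -1) ^ k : ℤˣ) : ℤ) := by rw [hsig]
    _ = (((if q' % 8 = 1 then (1 : ℤˣ) else -1) : ℤˣ) : ℤ) ^ k := Units.val_pow_eq_pow_val _ _
    _ = (ZMod.χ₈ (q.natAbs) : ℤ) ^ k := by rw [hchib]
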